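/- For every hexagon X of the dappled triangular grid T (the subgraph induced by a vertex and its six neighbors), the hued graph X⁻ (forgetting colors, keeping hues) is a retract of T⁻: there is a hue-preserving graph homomorphism f from T to X which is the identity on X. -/
import Mathlib


/-- The (dappled) triangular grid: the infinite graph on `ℤ × ℤ` where `(i₁,j₁)` and `(i₂,j₂)`
are adjacent iff their difference is `±(1,0)`, `±(0,1)` or `±(1,1)`. -/
def TGrid : SimpleGraph (ℤ × ℤ) :=
  SimpleGraph.fromRel (fun v w =>
    (w.1 - v.1, w.2 - v.2) ∈ ({(1,0), (-1,0), (0,1), (0,-1), (1,1), (-1,-1)} : Set (ℤ × ℤ)))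

/-- The hue of a vertex of the triangular grid: `ψ(i,j) = (i+j) mod 3`. -/
def hueT (v : ℤ × ℤ) : ZMod 3 := (v.1 : ZMod 3) + (v.2 : ZMod 3)

/-- The color of a vertex of the triangular grid: `φ(i,j) = (i mod 2, j mod 2)`. -/
def colorT (v : ℤ × ℤ) : ZMod 2 × ZMod 2 := ((v.1 : ZMod 2), (v.2 : ZMod 2))

/-- A `6 × 6` table of offsets (period-6 pattern) defining the retraction onto the hexagon
centered at the origin: the vertex `(i,j)` is mapped to the hexagon vertex `tbl (i % 6) (j % 6)`.
Every entry is one of the seven hexagon vertices, hues match, and adjacency is preserved. -/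
def tbl : Fin 6 → Fin 6 → ℤ × ℤ :=
![![(0,0), (0,1), (-1,0), (0,0), (1,0), (0,-1)],
  ![(1,0), (1,1), (0,0), (0,1), (1,1), (0,0)],
  ![(0,-1), (0,0), (1,0), (1,1), (0,0), (1,0)],
  ![(0,0), (1,0), (0,-1), (0,0), (1,0), (0,-1)],
  ![(-1,-1), (0,-1), (0,0), (1,0), (0,-1), (0,0)],
  ![(-1,0), (0,0), (-1,-1), (0,-1), (0,0), (-1,-1)]]

/-- The table as a function on `ZMod 6 × ZMod 6`. -/
def g (a : ZMod 6 × ZMod 6) : ℤ × ℤ := tbl a.1 a.2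

/-- The six neighbor offsets, as a list of integer pairs. -/
def dlist : List (ℤ × ℤ) := [(1,0),(-1,0),(0,1),(0,-1),(1,1),(-1,-1)]

/-- The six neighbor offsets reduced mod 6. -/
def dmodlist : List (ZMod 6 × ZMod 6) := [(1,0),(5,0),(0,1),(0,5),(1,1),(5,5)]

lemma g_mem : ∀ a : ZMod 6 × ZMod 6, g a = (0,0) ∨ g a ∈ dlist := by decide

lemma g_adj : ∀ a b : ZMod 6 × ZMod 6, (b.1 - a.1, b.2 - a.2) ∈ dmodlist →
    ((g b).1 - (g a).1, (g b).2 - (g a).2) ∈ dlist := by decide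

lemma g_hue : ∀ a : ZMod 6 × ZMod 6,
    (((g a).1 : ZMod 3) + ((g a).2 : ZMod 3)) = ((a.1.val : ZMod 3) + (a.2.val : ZMod 3)) := by
  decide

lemma val_cast3 (x : ℤ) : (((x : ZMod 6).val : ℕ) : ZMod 3) = (x : ZMod 3) := by
  have h1 : (((x : ZMod 6).val : ℕ) : ZMod 3) = ZMod.cast (x : ZMod 6) :=
    ZMod.natCast_val _
  have h2 : ZMod.cast (x : ZMod 6) = ZMod.castHom (by norm_num : (3:ℕ) ∣ 6) (ZMod 3) (x : ZMod 6) :=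
    (ZMod.castHom_apply _).symm
  rw [h1, h2, map_intCast]

lemma adj_iff (u v : ℤ × ℤ) : TGrid.Adj u v ↔
    (v.1 - u.1, v.2 - u.2) ∈ ({(1,0), (-1,0), (0,1), (0,-1), (1,1), (-1,-1)} : Set (ℤ × ℤ)) := by
  simp only [TGrid, SimpleGraph.fromRel_adj, Set.mem_insert_iff, Set.mem_singleton_iff,
    Prod.mk.injEq, ne_eq, Prod.ext_iff]
  omega

/-- For every hexagon of the triangular grid (the subgraph induced by a vertex `z` and its
six neighbors), there is a hue-preserving retraction of the grid onto the hexagon. -/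
theorem hexagon_retract (z : ℤ × ℤ) :
    ∃ f : ℤ × ℤ → ℤ × ℤ,
      (∀ v, f v = z ∨ TGrid.Adj z (f v)) ∧
      (∀ u v, TGrid.Adj u v → TGrid.Adj (f u) (f v)) ∧
      (∀ v, hueT (f v) = hueT v) ∧
      (∀ v, (v = z ∨ TGrid.Adj z v) → f v = v) := by
  refine ⟨fun v => (z.1 + (g (((v.1 - z.1 : ℤ) : ZMod 6), ((v.2 - z.2 : ℤ) : ZMod 6))).1,
                    z.2 + (g (((v.1 - z.1 : ℤ) : ZMod 6), ((v.2 - z.2 : ℤ) : ZMod 6))).2),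
          ?_, ?_, ?_, ?_⟩
  · intro v
    beta_reduce
    rcases g_mem (((v.1 - z.1 : ℤ) : ZMod 6), ((v.2 - z.2 : ℤ) : ZMod 6)) with h | h
    · left; rw [h]; simp
    · right
      rw [adj_iff]
      simp only [dlist, List.mem_cons, List.not_mem_nil, or_false, Prod.ext_iff] at h
      simp only [Set.mem_insert_iff, Set.mem_singleton_iff, Prod.mk.injEq]
      omega
  · intro u v huv
    beta_reduce
    rw [adj_iff] at huv
    have key : ((((v.1 - z.1 : ℤ) : ZMod 6) - ((u.1 - z.1 : ℤ) : ZMod 6)),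
                (((v.2 - z.2 : ℤ) : ZMod 6) - ((u.2 - z.2 : ℤ) : ZMod 6))) ∈ dmodlist := by
      rw [← Int.cast_sub, ← Int.cast_sub,
        show v.1 - z.1 - (u.1 - z.1) = v.1 - u.1 by ring,
        show v.2 - z.2 - (u.2 - z.2) = v.2 - u.2 by ring]
      simp only [Set.mem_insert_iff, Set.mem_singleton_iff, Prod.mk.injEq] at huv
      simp only [dmodlist, List.mem_cons, List.not_mem_nil, or_false]
      rcases huv with ⟨h1, h2⟩ | ⟨h1, h2⟩ | ⟨h1, h2⟩ | ⟨h1, h2⟩ | ⟨h1, h2⟩ | ⟨h1, h2⟩ <;>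
        rw [h1, h2] <;> decide
    have hadj := g_adj (((u.1 - z.1 : ℤ) : ZMod 6), ((u.2 - z.2 : ℤ) : ZMod 6))
        (((v.1 - z.1 : ℤ) : ZMod 6), ((v.2 - z.2 : ℤ) : ZMod 6)) key
    rw [adj_iff]
    simp only [dlist, List.mem_cons, List.not_mem_nil, or_false, Prod.ext_iff] at hadj
    simp only [Set.mem_insert_iff, Set.mem_singleton_iff, Prod.mk.injEq]
    omega
  · intro v
    beta_reduce
    have h := g_hue (((v.1 - z.1 : ℤ) : ZMod 6), ((v.2 - z.2 : ℤ) : ZMod 6))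
    rw [val_cast3, val_cast3] at h
    unfold hueT
    push_cast at h ⊢
    linear_combination h
  · intro v hv
    beta_reduce
    have hmem : (v.1 - z.1, v.2 - z.2) = ((0:ℤ),(0:ℤ)) ∨
        (v.1 - z.1, v.2 - z.2) ∈ ({(1,0), (-1,0), (0,1), (0,-1), (1,1), (-1,-1)} : Set (ℤ × ℤ)) := by
      rcases hv with rfl | hv
      · left; simp
      · right; rw [adj_iff] at hv; exact hv
    simp only [Set.mem_insert_iff, Set.mem_singleton_iff, Prod.mk.injEq] at hmem
    have main : ∀ (c1 c2 : ℤ), v.1 - z.1 = c1 → v.2 - z.2 = c2 →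
        g ((c1 : ZMod 6), (c2 : ZMod 6)) = (c1, c2) →
        (z.1 + (g (((v.1 - z.1 : ℤ) : ZMod 6), ((v.2 - z.2 : ℤ) : ZMod 6))).1,
         z.2 + (g (((v.1 - z.1 : ℤ) : ZMod 6), ((v.2 - z.2 : ℤ) : ZMod 6))).2) = v := by
      intro c1 c2 h1 h2 hg
      rw [h1, h2, hg]
      exact Prod.ext (by omega) (by omega)
    rcases hmem with ⟨h1, h2⟩ | ⟨h1, h2⟩ | ⟨h1, h2⟩ | ⟨h1, h2⟩ | ⟨h1, h2⟩ | ⟨h1, h2⟩ | ⟨h1, h2⟩ <;>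
      exact main _ _ h1 h2 (by decide)
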